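/- Let N ≥ 1, α, β ∈ ℝ, ε > 0, and let a ∈ ℝ^N be of antipodal type, i.e. for all i, j there exists an integer m with a_i − a_j = m π. Set Ω = sin α · sin β. Then φ_i(t) = Ω t + a_i and the constant coupling weights κ_ij = −sin(a_i − a_j + β) satisfy, for all t ∈ ℝ and all i, j, the equations dφ_i/dt = −(1/N) Σ_{j=1}^N κ_ij sin(φ_i(t) − φ_j(t) + α) and dκ_ij/dt = −ε (sin(φ_i(t) − φ_j(t) + β) + κ_ij). -/

import Mathlib

open Real

/-- One-cluster states of antipodal type are solutions of the adaptive phase-oscillator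
network, with collective frequency `Ω = sin α · sin β`. -/
theorem one_cluster_antipodal_solution
    (N : ℕ) (hN : 1 ≤ N) (α β ε : ℝ) (hε : 0 < ε)
    (a : Fin N → ℝ)
    (hanti : ∀ i j, ∃ m : ℤ, a i - a j = m * Real.pi)
    (Ω : ℝ) (hΩ : Ω = Real.sin α * Real.sin β)
    (φ : Fin N → ℝ → ℝ) (κ : Fin N → Fin N → ℝ)
    (hφ : ∀ i t, φ i t = Ω * t + a i)
    (hκ : ∀ i j, κ i j = - Real.sin (a i - a j + β)) :
    (∀ i t, HasDerivAt (φ i)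
      (-(1 / (N : ℝ)) * ∑ j, κ i j * Real.sin (φ i t - φ j t + α)) t) ∧
    (∀ i j t, HasDerivAt (fun _ : ℝ => κ i j)
      (-ε * (Real.sin (φ i t - φ j t + β) + κ i j)) t) := by
  have hdiff : ∀ i j (t : ℝ), φ i t - φ j t = a i - a j := by
    intro i j t; rw [hφ, hφ]; ring
  have hterm : ∀ i j (t : ℝ),
      κ i j * Real.sin (φ i t - φ j t + α) = -(Real.sin α * Real.sin β) := by
    intro i j t
    obtain ⟨m, hm⟩ := hanti i j
    rw [hκ, hdiff, hm, add_comm ((m : ℝ) * Real.pi) β, add_comm ((m : ℝ) * Real.pi) α,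
      Real.sin_add_int_mul_pi, Real.sin_add_int_mul_pi]
    have h1 : ((-1 : ℝ) ^ m) ^ 2 = 1 := by
      rcases Int.even_or_odd m with h | h
      · rw [h.neg_one_zpow]; norm_num
      · rw [h.neg_one_zpow]; norm_num
    ring_nf
    rw [h1]
    ring
  constructor
  · intro i t
    have hsum : -(1 / (N : ℝ)) * ∑ j, κ i j * Real.sin (φ i t - φ j t + α) = Ω := by
      have : ∑ j, κ i j * Real.sin (φ i t - φ j t + α)
          = ∑ _j : Fin N, -(Real.sin α * Real.sin β) := by
        exact Finset.sum_congr rfl fun j _ => hterm i j t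
      rw [this, Finset.sum_const, Finset.card_univ, Fintype.card_fin, hΩ]
      have hN' : (N : ℝ) ≠ 0 := by positivity
      field_simp
      rw [nsmul_eq_mul]; ring
    rw [hsum]
    have : φ i = fun t => Ω * t + a i := funext (hφ i)
    rw [this]
    simpa using ((hasDerivAt_id t).const_mul Ω).add_const (a i)
  · intro i j t
    have hz : Real.sin (φ i t - φ j t + β) + κ i j = 0 := by
      rw [hκ, hdiff]; ring
    rw [hz, mul_zero]
    exact hasDerivAt_const t (κ i j)
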